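/- arXiv:2310.08454 — 4 statements merged into one kernel-verified Lean document; each statement's English description precedes it below -/
import Mathlib

section
/- For an M-convex set B_i with rank function ρ_i, a point z_i ∈ B_i, and items e, f ∈ E, the maximal exchange weight w_i(e,f) := max{α ∈ Z : z_i − αχ_f + αχ_e ∈ B_i} equals min{ρ_i(S) − z_i(S) : S ⊆ E, e ∈ S, f ∉ S}. -/
open Finset

variable {E : Type*} [Fintype E] [DecidableEq E]

/-- Characteristic (unit) vector of an item. -/
def chi (e : E) : E → ℤ := fun f => if f = e then 1 else 0

/-- The integer box `[0, b]_ℤ`. -/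
def Box (b : E → ℤ) : Set (E → ℤ) := {z | ∀ e, 0 ≤ z e ∧ z e ≤ b e}

/-- M-convex set: exchange property. -/
def MConvex (B : Set (E → ℤ)) : Prop :=
  ∀ x ∈ B, ∀ y ∈ B, ∀ e : E, y e < x e →
    ∃ f : E, x f < y f ∧ x - chi e + chi f ∈ B ∧ y + chi e - chi f ∈ B

/-- `ρ` is the rank function of `B`: `ρ S = max {z(S) : z ∈ B}`. -/
def IsRank (B : Set (E → ℤ)) (ρ : Finset E → ℤ) : Prop :=
  ∀ S : Finset E, IsGreatest ((fun z : E → ℤ => ∑ e ∈ S, z e) '' B) (ρ S)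

/-- A set `S` is tight for `z` if `z(S) = ρ S`. -/
def Tight (ρ : Finset E → ℤ) (z : E → ℤ) (S : Finset E) : Prop :=
  ∑ e ∈ S, z e = ρ S

lemma chi_nonneg (g k : E) : (0:ℤ) ≤ chi g k := by
  unfold chi; split <;> norm_num

lemma chi_sum (S : Finset E) (g : E) : ∑ k ∈ S, chi g k = if g ∈ S then (1:ℤ) else 0 := by
  simp [chi]

lemma key_lemma (B : Set (E → ℤ)) (hM : MConvex B) (x : E → ℤ) (hx : x ∈ B) (f : E)
    (S : Finset E) (hS : ∀ g, g ∈ S ↔ x + chi g - chi f ∉ B) :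
    ∀ n : ℕ, ∀ y ∈ B, ∑ k, |y k - x k| ≤ (n : ℤ) → ∑ g ∈ S, y g ≤ ∑ g ∈ S, x g := by
  intro n
  induction n with
  | zero =>
    intro y hy hb
    have h0 : ∑ k, |y k - x k| = 0 :=
      le_antisymm (by exact_mod_cast hb) (Finset.sum_nonneg fun i _ => abs_nonneg _)
    have heq : ∀ k ∈ Finset.univ, |y k - x k| = 0 :=
      (Finset.sum_eq_zero_iff_of_nonneg fun i _ => abs_nonneg _).1 h0
    refine le_of_eq (Finset.sum_congr rfl fun k _ => ?_)
    have := heq k (mem_univ k)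
    have := abs_eq_zero.1 this
    linarith
  | succ n ih =>
    intro y hy hb
    by_contra hlt
    push_neg at hlt
    have hg : ∃ g ∈ S, x g < y g := by
      by_contra hc
      push_neg at hc
      exact absurd (Finset.sum_le_sum hc) (not_le.2 hlt)
    obtain ⟨g, hgS, hgx⟩ := hg
    obtain ⟨h, hhx, hyB, hxB⟩ := hM y hy x hx g hgx
    have hgh : g ≠ h := by rintro rfl; omega
    have hgf : g ≠ f := by
      rintro rfl
      refine (hS g).1 hgS ?_
      have : x + chi g - chi g = x := by abel
      rw [this]; exact hx
    by_cases hhS : h ∈ S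
    · -- shrink distance
      have hsum : ∑ k ∈ S, (y - chi g + chi h) k = ∑ k ∈ S, y k := by
        simp only [Pi.add_apply, Pi.sub_apply, Finset.sum_add_distrib,
          Finset.sum_sub_distrib, chi_sum, hgS, hhS, if_pos]
        ring
      have hpt : ∀ k, |(y - chi g + chi h) k - x k|
          = |y k - x k| + ((if k = g then (-1:ℤ) else 0) + (if k = h then (-1:ℤ) else 0)) := by
        intro k
        by_cases hk : k = g
        · have hkh : k ≠ h := by rw [hk]; exact hgh
          have h1 : (y - chi g + chi h) k = y k - 1 := by
            simp [chi, hk, hkh, hgh]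
          have h2 : x k < y k := by rw [hk]; exact hgx
          rw [h1]
          simp only [if_pos hk, if_neg hkh]
          rw [Int.abs_eq_natAbs, Int.abs_eq_natAbs]
          omega
        · by_cases hk2 : k = h
          · have h1 : (y - chi g + chi h) k = y k + 1 := by
              simp [chi, hk, hk2, hgh.symm]
            have h2 : y k < x k := by rw [hk2]; exact hhx
            rw [h1]
            simp only [if_neg hk, if_pos hk2]
            rw [Int.abs_eq_natAbs, Int.abs_eq_natAbs]
            omega
          · have h1 : (y - chi g + chi h) k = y k := by
              simp [chi, hk, hk2, hgh.symm]
            rw [h1]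
            simp [hk, hk2]
      have hdist : ∑ k, |(y - chi g + chi h) k - x k| ≤ (n : ℤ) := by
        have : ∑ k, |(y - chi g + chi h) k - x k|
            = (∑ k, |y k - x k|) + (-1 + -1) := by
          rw [Finset.sum_congr rfl (fun k _ => hpt k)]
          rw [Finset.sum_add_distrib, Finset.sum_add_distrib]
          simp
        rw [this]
        push_cast at hb ⊢
        linarith
      have := ih (y - chi g + chi h) hyB hdist
      rw [hsum] at this
      omega
    · -- h ∉ S
      have hhfB : x + chi h - chi f ∈ B := by
        by_contra hc
        exact hhS ((hS h).2 hc)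
      by_cases hhf : h = f
      · subst hhf
        exact (hS g).1 hgS hxB
      · have hcond : (x + chi h - chi f) g < (x + chi g - chi h) g := by
          simp [chi, hgh, hgf]
        obtain ⟨k, hk1, _, hk3⟩ := hM (x + chi g - chi h) hxB (x + chi h - chi f) hhfB g hcond
        have hkh : k = h := by
          by_contra hkh
          have e1 : (x + chi g - chi h) k = x k + chi g k := by
            simp [chi, hkh]
          have e2 : (x + chi h - chi f) k = x k - chi f k := by
            simp [chi, hkh]
          rw [e1, e2] at hk1
          have := chi_nonneg g k
          have := chi_nonneg f k
          linarith
        have heq2 : (x + chi h - chi f) + chi g - chi h = x + chi g - chi f := by abel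
        rw [hkh, heq2] at hk3
        exact (hS g).1 hgS hk3

/-- The maximal exchange weight `w(e,f) = max {α : z − αχ_f + αχ_e ∈ B}` equals
`min {ρ S − z(S) : e ∈ S, f ∉ S}`. -/
theorem stmt1 (b : E → ℤ) (B : Set (E → ℤ)) (hBox : B ⊆ Box b) (hM : MConvex B)
    (ρ : Finset E → ℤ) (hρ : IsRank B ρ) (z : E → ℤ) (hz : z ∈ B)
    (e f : E) (hef : e ≠ f) (w : ℤ)
    (hw : IsGreatest {α : ℤ | z - α • chi f + α • chi e ∈ B} w) :
    IsLeast {d : ℤ | ∃ S : Finset E, e ∈ S ∧ f ∉ S ∧ d = ρ S - ∑ g ∈ S, z g} w := by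
  classical
  set x : E → ℤ := z - w • chi f + w • chi e with hxdef
  have hxB : x ∈ B := hw.1
  -- x(T) = z(T) + w for any T with e ∈ T, f ∉ T
  have hxT : ∀ T : Finset E, e ∈ T → f ∉ T → ∑ g ∈ T, x g = (∑ g ∈ T, z g) + w := by
    intro T heT hfT
    simp only [hxdef, Pi.add_apply, Pi.sub_apply, Pi.smul_apply, smul_eq_mul,
      Finset.sum_add_distrib, Finset.sum_sub_distrib, ← Finset.mul_sum, chi_sum,
      if_pos heT, if_neg hfT]
    ring
  have hnot : x + chi e - chi f ∉ B := by
    intro hmem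
    have hmem' : (w + 1) ∈ {α : ℤ | z - α • chi f + α • chi e ∈ B} := by
      have heq : z - (w+1) • chi f + (w+1) • chi e = x + chi e - chi f := by
        simp only [hxdef, add_smul, one_smul]
        abel
      show z - (w+1) • chi f + (w+1) • chi e ∈ B
      rw [heq]; exact hmem
    have := hw.2 hmem'
    omega
  set S : Finset E := Finset.univ.filter (fun g => x + chi g - chi f ∉ B) with hSdef
  have hS : ∀ g, g ∈ S ↔ x + chi g - chi f ∉ B := by
    intro g; simp [hSdef]
  have heS : e ∈ S := (hS e).2 hnot
  have hfS : f ∉ S := by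
    intro hmem
    refine (hS f).1 hmem ?_
    have : x + chi f - chi f = x := by abel
    rw [this]; exact hxB
  constructor
  · -- w is attained at S
    refine ⟨S, heS, hfS, ?_⟩
    obtain ⟨⟨y, hyB, hyρ⟩, hub⟩ := hρ S
    have h1 : ∑ g ∈ S, x g ≤ ρ S := hub ⟨x, hxB, rfl⟩
    have h2 : ∑ g ∈ S, y g ≤ ∑ g ∈ S, x g := by
      refine key_lemma B hM x hxB f S hS (∑ k, |y k - x k|).toNat y hyB ?_
      rw [Int.toNat_of_nonneg (Finset.sum_nonneg fun i _ => abs_nonneg _)]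
    have hts : ρ S = ∑ g ∈ S, x g := le_antisymm (hyρ ▸ h2) h1
    rw [hts, hxT S heS hfS]
    ring
  · -- lower bound
    rintro d ⟨T, heT, hfT, rfl⟩
    have h1 : ∑ g ∈ T, x g ≤ ρ T := (hρ T).2 ⟨x, hxB, rfl⟩
    rw [hxT T heT hfT] at h1
    linarith
end

section
/- (Weak duality and complementary slackness for polymatroid sum) For M-convex sets B_1,…,B_n ⊆ [0,b]_Z with rank functions ρ_i, any tuple z = (z_1,…,z_n) with z_i ∈ B_i, and any S ⊆ E, we have Σ_{e∈E} min{Σ_i z_i(e), b(e)} ≤ Σ_i ρ_i(E∖S) + b(S), with equality if and only if: (1) Σ_i z_i(e) ≥ b(e) for all e ∈ S, (2) Σ_i z_i(e) ≤ b(e) for all e ∈ E∖S, and (3) z_i(E∖S) = ρ_i(E∖S) for all i. -/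
open Finset

variable {E : Type*} [Fintype E] [DecidableEq E]

/-- Weak duality and complementary slackness for polymatroid sum. -/
theorem stmt3 {N : Type*} [Fintype N] (b : E → ℤ) (B : N → Set (E → ℤ))
    (hBox : ∀ i, B i ⊆ Box b) (hM : ∀ i, MConvex (B i))
    (ρ : N → Finset E → ℤ) (hρ : ∀ i, IsRank (B i) (ρ i))
    (z : N → E → ℤ) (hz : ∀ i, z i ∈ B i) (S : Finset E) :
    (∑ e : E, min (∑ i, z i e) (b e) ≤ ∑ i, ρ i Sᶜ + ∑ e ∈ S, b e) ∧
    ((∑ e : E, min (∑ i, z i e) (b e) = ∑ i, ρ i Sᶜ + ∑ e ∈ S, b e) ↔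
      ((∀ e ∈ S, b e ≤ ∑ i, z i e) ∧
       (∀ e ∈ Sᶜ, ∑ i, z i e ≤ b e) ∧
       (∀ i, ∑ e ∈ Sᶜ, z i e = ρ i Sᶜ))) := by
  have hzle : ∀ i, ∑ e ∈ Sᶜ, z i e ≤ ρ i Sᶜ := fun i =>
    (hρ i Sᶜ).2 ⟨z i, hz i, rfl⟩
  have hsplit : ∑ e : E, min (∑ i, z i e) (b e)
      = ∑ e ∈ S, min (∑ i, z i e) (b e) + ∑ e ∈ Sᶜ, min (∑ i, z i e) (b e) :=
    (Finset.sum_add_sum_compl S _).symm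
  have hA : ∑ e ∈ S, min (∑ i, z i e) (b e) ≤ ∑ e ∈ S, b e :=
    Finset.sum_le_sum fun e _ => min_le_right _ _
  have hB : ∑ e ∈ Sᶜ, min (∑ i, z i e) (b e) ≤ ∑ e ∈ Sᶜ, ∑ i, z i e :=
    Finset.sum_le_sum fun e _ => min_le_left _ _
  have hC : ∑ e ∈ Sᶜ, ∑ i, z i e = ∑ i, ∑ e ∈ Sᶜ, z i e := Finset.sum_comm
  have hD : ∑ i, ∑ e ∈ Sᶜ, z i e ≤ ∑ i, ρ i Sᶜ :=
    Finset.sum_le_sum fun i _ => hzle i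
  constructor
  · linarith
  constructor
  · intro h
    have e1 : ∑ e ∈ S, min (∑ i, z i e) (b e) = ∑ e ∈ S, b e := by linarith
    have e2 : ∑ e ∈ Sᶜ, min (∑ i, z i e) (b e) = ∑ e ∈ Sᶜ, ∑ i, z i e := by linarith
    have e3 : ∑ i, ∑ e ∈ Sᶜ, z i e = ∑ i, ρ i Sᶜ := by linarith
    refine ⟨fun e he => ?_, fun e he => ?_, fun i => ?_⟩
    · have := (Finset.sum_eq_sum_iff_of_le
        (fun e (_ : e ∈ S) => min_le_right (∑ i, z i e) (b e))).mp e1 e he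
      exact min_eq_right_iff.mp this
    · have := (Finset.sum_eq_sum_iff_of_le
        (fun e (_ : e ∈ Sᶜ) => min_le_left (∑ i, z i e) (b e))).mp e2 e he
      exact min_eq_left_iff.mp this
    · exact (Finset.sum_eq_sum_iff_of_le
        (fun i (_ : i ∈ Finset.univ) => hzle i)).mp e3 i (Finset.mem_univ i)
  · rintro ⟨h1, h2, h3⟩
    have e1 : ∑ e ∈ S, min (∑ i, z i e) (b e) = ∑ e ∈ S, b e :=
      Finset.sum_congr rfl fun e he => min_eq_right (h1 e he)
    have e2 : ∑ e ∈ Sᶜ, min (∑ i, z i e) (b e) = ∑ e ∈ Sᶜ, ∑ i, z i e :=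
      Finset.sum_congr rfl fun e he => min_eq_left (h2 e he)
    have e3 : ∑ i, ∑ e ∈ Sᶜ, z i e = ∑ i, ρ i Sᶜ :=
      Finset.sum_congr rfl fun i _ => h3 i
    linarith
end

section
/- (Min-max theorem for polymatroid sum) For M-convex sets B_1,…,B_n ⊆ [0,b]_Z with rank functions ρ_i, max over tuples z with z_i ∈ B_i of Σ_{e∈E} min{Σ_i z_i(e), b(e)} equals min over S ⊆ E of (Σ_i ρ_i(E∖S) + b(S)). -/
open Finset

variable {E : Type*} [Fintype E] [DecidableEq E]

lemma sum_chi (e : E) : ∑ g : E, chi e g = 1 := by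
  simp [chi]

lemma mconvex_sum_aux {B : Set (E → ℤ)} (hB : MConvex B) :
    ∀ n : ℕ, ∀ x ∈ B, ∀ y ∈ B, (∑ e, (x e - y e).natAbs) ≤ n →
      ∑ e, x e = ∑ e, y e := by
  intro n
  induction n with
  | zero =>
    intro x hx y hy h
    have h0 : ∀ e, (x e - y e).natAbs = 0 := by
      intro e
      have := Finset.sum_eq_zero_iff.mp (Nat.le_zero.mp h) e (mem_univ e)
      exact this
    exact Finset.sum_congr rfl (fun e _ => by have := h0 e; omega)
  | succ n ih =>
    intro x hx y hy h
    by_cases hxy : ∀ e, x e = y e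
    · exact Finset.sum_congr rfl (fun e _ => hxy e)
    · push_neg at hxy
      obtain ⟨e, he⟩ := hxy
      rcases lt_or_gt_of_ne he with hlt | hgt
      · -- x e < y e : exchange on (y, x)
        obtain ⟨f, hf, hy', _⟩ := hB y hy x hx e hlt
        have hef : e ≠ f := by intro h'; rw [h'] at hlt; omega
        have key : ∀ g, ((y - chi e + chi f) g - x g).natAbs
            + ((if g = e then 1 else 0) + (if g = f then 1 else 0)) = (x g - y g).natAbs := by
          intro g
          by_cases h1 : g = e
          · have h2 : g ≠ f := by rw [h1]; exact hef
            subst h1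
            simp only [Pi.add_apply, Pi.sub_apply, chi, if_neg h2, eq_self_iff_true, if_true]
            omega
          · by_cases h2 : g = f
            · subst h2
              simp only [Pi.add_apply, Pi.sub_apply, chi, if_neg h1, eq_self_iff_true, if_true]
              omega
            · simp only [Pi.add_apply, Pi.sub_apply, chi, if_neg h1, if_neg h2]
              omega
        have hm : (∑ g, ((y - chi e + chi f) g - x g).natAbs) + 2 = ∑ g, (x g - y g).natAbs := by
          have := Finset.sum_congr rfl (fun g (_ : g ∈ univ) => (key g).symm)
          rw [this, Finset.sum_add_distrib, Finset.sum_add_distrib]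
          simp [Finset.sum_ite_eq' univ e (fun _ => (1:ℕ)), Finset.sum_ite_eq' univ f (fun _ => (1:ℕ))]
        have hle : (∑ g, (x g - (y - chi e + chi f) g).natAbs) ≤ n := by
          have : ∀ g, (x g - (y - chi e + chi f) g).natAbs = ((y - chi e + chi f) g - x g).natAbs := by
            intro g; omega
          rw [Finset.sum_congr rfl (fun g _ => this g)]
          omega
        have := ih x hx _ hy' hle
        have hsy : ∑ g, (y - chi e + chi f) g = ∑ g, y g := by
          simp [Finset.sum_add_distrib, Finset.sum_sub_distrib, sum_chi]
        omega
      · -- y e < x e : exchange on (x, y)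
        obtain ⟨f, hf, hx', _⟩ := hB x hx y hy e hgt
        have hef : e ≠ f := by intro h'; rw [h'] at hgt; omega
        have key : ∀ g, ((x - chi e + chi f) g - y g).natAbs
            + ((if g = e then 1 else 0) + (if g = f then 1 else 0)) = (x g - y g).natAbs := by
          intro g
          by_cases h1 : g = e
          · have h2 : g ≠ f := by rw [h1]; exact hef
            subst h1
            simp only [Pi.add_apply, Pi.sub_apply, chi, if_neg h2, eq_self_iff_true, if_true]
            omega
          · by_cases h2 : g = f
            · subst h2
              simp only [Pi.add_apply, Pi.sub_apply, chi, if_neg h1, eq_self_iff_true, if_true]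
              omega
            · simp only [Pi.add_apply, Pi.sub_apply, chi, if_neg h1, if_neg h2]
              omega
        have hm : (∑ g, ((x - chi e + chi f) g - y g).natAbs) + 2 = ∑ g, (x g - y g).natAbs := by
          have := Finset.sum_congr rfl (fun g (_ : g ∈ univ) => (key g).symm)
          rw [this, Finset.sum_add_distrib, Finset.sum_add_distrib]
          simp [Finset.sum_ite_eq' univ e (fun _ => (1:ℕ)), Finset.sum_ite_eq' univ f (fun _ => (1:ℕ))]
        have hle : (∑ g, ((x - chi e + chi f) g - y g).natAbs) ≤ n := by omega
        have := ih _ hx' y hy hle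
        have hsx : ∑ g, (x - chi e + chi f) g = ∑ g, x g := by
          simp [Finset.sum_add_distrib, Finset.sum_sub_distrib, sum_chi]
        omega

lemma mconvex_sum_eq {B : Set (E → ℤ)} (hB : MConvex B) {x y : E → ℤ}
    (hx : x ∈ B) (hy : y ∈ B) : ∑ e, x e = ∑ e, y e :=
  mconvex_sum_aux hB _ x hx y hy le_rfl

lemma tight_aux {B : Set (E → ℤ)} (hB : MConvex B) (R : Finset E) {z : E → ℤ} (hz : z ∈ B)
    (hno : ∀ e ∉ R, ∀ f ∈ R, z - chi e + chi f ∉ B) :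
    ∀ n : ℕ, ∀ y ∈ B, (∑ e, (y e - z e).natAbs) ≤ n →
      ∑ e ∈ R, y e ≤ ∑ e ∈ R, z e := by
  intro n
  induction n with
  | zero =>
    intro y hy h
    have h0 : ∀ e, (y e - z e).natAbs = 0 := fun e =>
      Finset.sum_eq_zero_iff.mp (Nat.le_zero.mp h) e (mem_univ e)
    exact le_of_eq (Finset.sum_congr rfl (fun e _ => by have := h0 e; omega))
  | succ n ih =>
    intro y hy h
    by_contra hcon
    push_neg at hcon
    -- total sums equal
    have htot : ∑ e, y e = ∑ e, z e := mconvex_sum_eq hB hy hz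
    have hcompl : ∑ e ∈ Rᶜ, y e < ∑ e ∈ Rᶜ, z e := by
      have h1 := Finset.sum_compl_add_sum R y
      have h2 := Finset.sum_compl_add_sum R z
      omega
    have hex : ∃ e ∈ Rᶜ, y e < z e := by
      by_contra hc
      push_neg at hc
      exact absurd (Finset.sum_le_sum hc) (not_le.mpr hcompl)
    obtain ⟨e, heR, he⟩ := hex
    have heR' : e ∉ R := Finset.mem_compl.mp heR
    obtain ⟨f, hf, h1, h2⟩ := hB z hz y hy e he
    have hfR : f ∉ R := fun hfR => hno e heR' f hfR h1
    have hef : e ≠ f := by intro h'; rw [h'] at he; omega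
    -- measure decreases
    have key : ∀ g, ((y + chi e - chi f) g - z g).natAbs
        + ((if g = e then 1 else 0) + (if g = f then 1 else 0)) = (y g - z g).natAbs := by
      intro g
      by_cases hg1 : g = e
      · have hg2 : g ≠ f := by rw [hg1]; exact hef
        subst hg1
        simp only [Pi.add_apply, Pi.sub_apply, chi, if_neg hg2, eq_self_iff_true, if_true]
        omega
      · by_cases hg2 : g = f
        · subst hg2
          simp only [Pi.add_apply, Pi.sub_apply, chi, if_neg hg1, eq_self_iff_true, if_true]
          omega
        · simp only [Pi.add_apply, Pi.sub_apply, chi, if_neg hg1, if_neg hg2]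
          omega
    have hm : (∑ g, ((y + chi e - chi f) g - z g).natAbs) + 2 = ∑ g, (y g - z g).natAbs := by
      have := Finset.sum_congr rfl (fun g (_ : g ∈ univ) => (key g).symm)
      rw [this, Finset.sum_add_distrib, Finset.sum_add_distrib]
      simp [Finset.sum_ite_eq' univ e (fun _ => (1:ℕ)), Finset.sum_ite_eq' univ f (fun _ => (1:ℕ))]
    have hR : ∑ g ∈ R, (y + chi e - chi f) g = ∑ g ∈ R, y g := by
      refine Finset.sum_congr rfl (fun g hg => ?_)
      have hg1 : g ≠ e := fun h' => heR' (h' ▸ hg)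
      have hg2 : g ≠ f := fun h' => hfR (h' ▸ hg)
      simp [Pi.add_apply, Pi.sub_apply, chi, if_neg hg1, if_neg hg2]
    have := ih _ h2 (by omega)
    omega

lemma tight_lemma {B : Set (E → ℤ)} (hB : MConvex B) (R : Finset E) {z : E → ℤ} (hz : z ∈ B)
    (hno : ∀ e ∉ R, ∀ f ∈ R, z - chi e + chi f ∉ B) :
    ∀ y ∈ B, ∑ e ∈ R, y e ≤ ∑ e ∈ R, z e :=
  fun y hy => tight_aux hB R hz hno _ y hy le_rfl

lemma compose_aux {B : Set (E → ℤ)} (hB : MConvex B) (p : ℕ → E) :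
    ∀ n : ℕ, ∀ J : Finset ℕ, J.card ≤ n → ∀ K : ℕ, ∀ x ∈ B,
      (∀ i ≤ K, ∀ j ≤ K, p i = p j → i = j) →
      (∀ j ∈ J, j + 1 ≤ K) →
      (∀ j ∈ J, x - chi (p j) + chi (p (j+1)) ∈ B) →
      (∀ t u : ℕ, t < u → u + 1 ≤ K → x - chi (p t) + chi (p (u+1)) ∉ B) →
      x + ∑ j ∈ J, (chi (p (j+1)) - chi (p j)) ∈ B := by
  intro n
  induction n with
  | zero =>
    intro J hJ K x hx _ _ _ _
    have : J = ∅ := Finset.card_eq_zero.mp (Nat.le_zero.mp hJ)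
    subst this
    simpa using hx
  | succ n ih =>
    intro J hJcard K x hx hinj hbd H1 H2
    by_cases hJ : J = ∅
    · subst hJ; simpa using hx
    · have hne : J.Nonempty := Finset.nonempty_iff_ne_empty.mpr hJ
      set M := J.max' hne with hM
      have hMJ : M ∈ J := J.max'_mem hne
      have hMK : M + 1 ≤ K := hbd M hMJ
      set xM : E → ℤ := x - chi (p M) + chi (p (M+1)) with hxMdef
      have hxM : xM ∈ B := H1 M hMJ
      -- distinctness helper
      have hd : ∀ i ≤ K, ∀ j ≤ K, i ≠ j → p i ≠ p j := by
        intro i hi j hj hij hpij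
        exact hij (hinj i hi j hj hpij)
      -- H1'
      have H1' : ∀ t ∈ J.erase M, xM - chi (p t) + chi (p (t+1)) ∈ B := by
        intro t ht
        have htJ : t ∈ J := Finset.mem_of_mem_erase ht
        have htM : t < M := lt_of_le_of_ne (J.le_max' t htJ) (Finset.ne_of_mem_erase ht)
        have htK : t + 1 ≤ K := by omega
        have hu : x - chi (p t) + chi (p (t+1)) ∈ B := H1 t htJ
        have hlt : (x - chi (p t) + chi (p (t+1))) (p t) < xM (p t) := by
          have e1 : p t ≠ p (t+1) := hd t (by omega) (t+1) (by omega) (by omega)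
          have e2 : p t ≠ p M := hd t (by omega) M (by omega) (by omega)
          have e3 : p t ≠ p (M+1) := hd t (by omega) (M+1) (by omega) (by omega)
          simp only [hxMdef, Pi.add_apply, Pi.sub_apply, chi, if_neg e1, if_neg e2, if_neg e3,
            eq_self_iff_true, if_true]
          omega
        obtain ⟨f, hflt, hmem, _⟩ := hB xM hxM _ hu (p t) hlt
        have hfor : f = p (t+1) ∨ f = p M := by
          by_contra hc
          push_neg at hc
          obtain ⟨hc1, hc2⟩ := hc
          revert hflt
          simp only [hxMdef, Pi.add_apply, Pi.sub_apply, chi, if_neg hc1, if_neg hc2, not_lt]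
          split_ifs <;> omega
        rcases hfor with hf1 | hf2
        · rw [hf1] at hmem; exact hmem
        · exfalso
          rw [hf2] at hmem
          have heq : xM - chi (p t) + chi (p M) = x - chi (p t) + chi (p (M+1)) := by
            rw [hxMdef]; ring
          rw [heq] at hmem
          exact H2 t M htM hMK hmem
      -- H2'
      have H2' : ∀ t u : ℕ, t < u → u + 1 ≤ M → xM - chi (p t) + chi (p (u+1)) ∉ B := by
        intro t u htu huM hw
        set w : E → ℤ := xM - chi (p t) + chi (p (u+1)) with hwdef
        have hlt : x (p (M+1)) < w (p (M+1)) := by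
          have e1 : p (M+1) ≠ p M := hd (M+1) (by omega) M (by omega) (by omega)
          have e2 : p (M+1) ≠ p t := hd (M+1) (by omega) t (by omega) (by omega)
          have e3 : p (M+1) ≠ p (u+1) := hd (M+1) (by omega) (u+1) (by omega) (by omega)
          simp only [hwdef, hxMdef, Pi.add_apply, Pi.sub_apply, chi, if_neg e1, if_neg e2,
            if_neg e3, eq_self_iff_true, if_true]
          omega
        obtain ⟨f, hflt, hm1, hm2⟩ := hB w hw x hx (p (M+1)) hlt
        have hfor : f = p t ∨ f = p M := by
          by_contra hc
          push_neg at hc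
          obtain ⟨hc1, hc2⟩ := hc
          revert hflt
          simp only [hwdef, hxMdef, Pi.add_apply, Pi.sub_apply, chi, if_neg hc1, if_neg hc2, not_lt]
          split_ifs <;> omega
        rcases hfor with hf1 | hf2
        · rw [hf1] at hm2
          have heq : x + chi (p (M+1)) - chi (p t) = x - chi (p t) + chi (p (M+1)) := by ring
          rw [heq] at hm2
          exact H2 t M (by omega) hMK hm2
        · rw [hf2] at hm1
          have heq : w - chi (p (M+1)) + chi (p M) = x - chi (p t) + chi (p (u+1)) := by
            rw [hwdef, hxMdef]; ring
          rw [heq] at hm1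
          exact H2 t u htu (by omega) hm1
      -- apply IH
      have hcard' : (J.erase M).card ≤ n := by
        have := Finset.card_erase_of_mem hMJ
        have := Finset.card_pos.mpr hne
        omega
      have hinj' : ∀ i ≤ M, ∀ j ≤ M, p i = p j → i = j := by
        intro i hi j hj
        exact hinj i (by omega) j (by omega)
      have hbd' : ∀ j ∈ J.erase M, j + 1 ≤ M := by
        intro j hj
        have : j < M := lt_of_le_of_ne (J.le_max' j (Finset.mem_of_mem_erase hj))
          (Finset.ne_of_mem_erase hj)
        omega
      have hres := ih (J.erase M) hcard' M xM hxM hinj' hbd' H1' H2'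
      have heq : x + ∑ j ∈ J, (chi (p (j+1)) - chi (p j))
          = xM + ∑ j ∈ J.erase M, (chi (p (j+1)) - chi (p j)) := by
        rw [hxMdef, ← Finset.sum_erase_add J _ hMJ]
        ring
      rw [heq]
      exact hres

lemma splice_eq {α : Type*} (step : α → α → Prop) (p : ℕ → α) (k : ℕ)
    (hstep : ∀ j < k, step (p j) (p (j+1))) {i j : ℕ} (hij : i < j) (hjk : j ≤ k)
    (hpij : p i = p j) :
    ∃ q : ℕ → α, q 0 = p 0 ∧ q (k - (j - i)) = p k ∧
      ∀ t < k - (j - i), step (q t) (q (t+1)) := by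
  refine ⟨fun t => if t ≤ i then p t else p (t + (j - i)), by simp, ?_, ?_⟩
  · by_cases hm : k - (j - i) ≤ i
    · have h1 : k - (j - i) = i := by omega
      have h2 : j = k := by omega
      beta_reduce
      rw [h1, if_pos le_rfl, hpij, h2]
    · have : k - (j - i) + (j - i) = k := by omega
      simp only [if_neg hm, this]
  · intro t ht
    by_cases h1 : t + 1 ≤ i
    · simp only [if_pos h1, if_pos (by omega : t ≤ i)]
      exact hstep t (by omega)
    · by_cases h2 : t ≤ i
      · have hti : t = i := by omega
        subst hti
        have harg : t + 1 + (j - t) = j + 1 := by omega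
        beta_reduce
        rw [if_pos le_rfl, if_neg h1, harg, hpij]
        exact hstep j (by omega)
      · have harg : t + (j - i) + 1 = t + 1 + (j - i) := by omega
        simp only [if_neg h1, if_neg h2]
        rw [← harg]
        exact hstep (t + (j - i)) (by omega)

lemma splice_arc {α : Type*} (step : α → α → Prop) (p : ℕ → α) (k : ℕ)
    (hstep : ∀ j < k, step (p j) (p (j+1))) {i j : ℕ} (hij : i < j) (hjk : j ≤ k)
    (harc : step (p i) (p j)) :
    ∃ q : ℕ → α, q 0 = p 0 ∧ q (k - (j - i - 1)) = p k ∧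
      ∀ t < k - (j - i - 1), step (q t) (q (t+1)) := by
  refine ⟨fun t => if t ≤ i then p t else p (t + (j - i - 1)), by simp, ?_, ?_⟩
  · have hm : ¬ (k - (j - i - 1) ≤ i) := by omega
    have : k - (j - i - 1) + (j - i - 1) = k := by omega
    simp only [if_neg hm, this]
  · intro t ht
    by_cases h1 : t + 1 ≤ i
    · simp only [if_pos h1, if_pos (by omega : t ≤ i)]
      exact hstep t (by omega)
    · by_cases h2 : t ≤ i
      · have hti : t = i := by omega
        subst hti
        have harg : t + 1 + (j - t - 1) = j := by omega
        beta_reduce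
        rw [if_pos le_rfl, if_neg h1, harg]
        exact harc
      · have harg : t + (j - i - 1) + 1 = t + 1 + (j - i - 1) := by omega
        simp only [if_neg h1, if_neg h2]
        rw [← harg]
        exact hstep (t + (j - i - 1)) (by omega)

def PStep {N : Type*} (B : N → Set (E → ℤ)) (z : N → E → ℤ) (e f : E) : Prop :=
  ∃ i, z i - chi e + chi f ∈ B i

def PReach {N : Type*} [Fintype N] (b : E → ℤ) (B : N → Set (E → ℤ)) (z : N → E → ℤ)
    (e : E) : Prop :=
  ∃ (k : ℕ) (p : ℕ → E), p 0 = e ∧ (∑ i, z i (p k)) < b (p k) ∧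
    ∀ j < k, PStep B z (p j) (p (j+1))

/-- Min-max theorem for polymatroid sum: the maximum covered supply over feasible
allocations equals the minimum of `Σ_i ρ_i(E∖S) + b(S)` over sets `S`. -/
theorem stmt4 {N : Type*} [Fintype N] (b : E → ℤ) (B : N → Set (E → ℤ))
    (hBox : ∀ i, B i ⊆ Box b) (hM : ∀ i, MConvex (B i))
    (ρ : N → Finset E → ℤ) (hρ : ∀ i, IsRank (B i) (ρ i)) :
    ∃ v : ℤ,
      IsGreatest {t : ℤ | ∃ z : N → E → ℤ, (∀ i, z i ∈ B i) ∧
        t = ∑ e : E, min (∑ i, z i e) (b e)} v ∧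
      IsLeast {t : ℤ | ∃ S : Finset E, t = ∑ i, ρ i Sᶜ + ∑ e ∈ S, b e} v := by
  classical
  -- nonemptiness of each B i
  have hzex : ∀ i, ∃ w, w ∈ B i := by
    intro i
    obtain ⟨w, hw, -⟩ := (hρ i ∅).1
    exact ⟨w, hw⟩
  choose z₀ hz₀ using hzex
  -- weak duality
  have hweak : ∀ (z : N → E → ℤ), (∀ i, z i ∈ B i) → ∀ S : Finset E,
      ∑ e : E, min (∑ i, z i e) (b e) ≤ ∑ i, ρ i Sᶜ + ∑ e ∈ S, b e := by
    intro z hz S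
    have h1 : ∑ e ∈ S, min (∑ i, z i e) (b e) ≤ ∑ e ∈ S, b e :=
      Finset.sum_le_sum (fun e _ => min_le_right _ _)
    have h2 : ∑ e ∈ Sᶜ, min (∑ i, z i e) (b e) ≤ ∑ i, ρ i Sᶜ := by
      calc ∑ e ∈ Sᶜ, min (∑ i, z i e) (b e) ≤ ∑ e ∈ Sᶜ, ∑ i, z i e :=
            Finset.sum_le_sum (fun e _ => min_le_left _ _)
        _ = ∑ i, ∑ e ∈ Sᶜ, z i e := Finset.sum_comm
        _ ≤ ∑ i, ρ i Sᶜ := Finset.sum_le_sum (fun i _ => (hρ i Sᶜ).2 ⟨z i, hz i, rfl⟩)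
    have h3 := Finset.sum_compl_add_sum S (fun e => min (∑ i, z i e) (b e))
    omega
  -- extract the maximum
  obtain ⟨v, hvT, hvub⟩ := Int.exists_greatest_of_bdd
    (P := fun t : ℤ => ∃ z : N → E → ℤ, (∀ i, z i ∈ B i) ∧
      t = ∑ e : E, min (∑ i, z i e) (b e))
    ⟨∑ i, ρ i (∅ᶜ : Finset E) + ∑ e ∈ (∅ : Finset E), b e,
      fun t ht => by obtain ⟨z, hz, rfl⟩ := ht; exact hweak z hz ∅⟩
    ⟨_, z₀, hz₀, rfl⟩
  obtain ⟨z, hz, hveq⟩ := hvT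
  refine ⟨v, ⟨⟨z, hz, hveq⟩, fun t ht => hvub t ht⟩, ?_, ?_⟩
  swap
  · rintro t ⟨S, rfl⟩
    rw [hveq]
    exact hweak z hz S
  -- membership in the min side
  by_cases hA : ∃ e, b e < (∑ i, z i e) ∧ PReach b B z e
  · -- an augmenting path exists: contradiction with maximality
    exfalso
    obtain ⟨e0, he0, k1, q, hq0, hqk, hqstep⟩ := hA
    have hQ : ∃ k : ℕ, ∃ p : ℕ → E, b (p 0) < (∑ i, z i (p 0)) ∧
        (∑ i, z i (p k)) < b (p k) ∧ ∀ j < k, PStep B z (p j) (p (j+1)) :=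
      ⟨k1, q, by rw [hq0]; exact he0, hqk, hqstep⟩
    set k₀ := Nat.find hQ with hk₀def
    obtain ⟨p, hp0, hpk, hpstep⟩ := Nat.find_spec hQ
    rw [← hk₀def] at hpk hpstep
    have hmin : ∀ m, m < k₀ → ¬ (∃ p : ℕ → E, b (p 0) < (∑ i, z i (p 0)) ∧
        (∑ i, z i (p m)) < b (p m) ∧ ∀ j < m, PStep B z (p j) (p (j+1))) :=
      fun m hm => Nat.find_min hQ hm
    have hk₀pos : 0 < k₀ := by
      rcases Nat.eq_zero_or_pos k₀ with h | h
      · rw [h] at hpk; omega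
      · exact h
    have hinj : ∀ i ≤ k₀, ∀ j ≤ k₀, p i = p j → i = j := by
      intro i hi j hj hpij
      by_contra hne
      rcases Nat.lt_or_ge i j with h | h
      · obtain ⟨q', hq'0, hq'k, hq'step⟩ := splice_eq (PStep B z) p k₀ hpstep h hj hpij
        exact hmin (k₀ - (j - i)) (by omega)
          ⟨q', by rw [hq'0]; exact hp0, by rw [hq'k]; exact hpk, hq'step⟩
      · have h' : j < i := by omega
        obtain ⟨q', hq'0, hq'k, hq'step⟩ := splice_eq (PStep B z) p k₀ hpstep h' hi hpij.symm
        exact hmin (k₀ - (i - j)) (by omega)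
          ⟨q', by rw [hq'0]; exact hp0, by rw [hq'k]; exact hpk, hq'step⟩
    have hns : ∀ t u : ℕ, t < u → u + 1 ≤ k₀ → ¬ PStep B z (p t) (p (u+1)) := by
      intro t u htu hu harc
      obtain ⟨q', hq'0, hq'k, hq'step⟩ :=
        splice_arc (PStep B z) p k₀ hpstep (show t < u+1 by omega) (by omega) harc
      exact hmin (k₀ - (u + 1 - t - 1)) (by omega)
        ⟨q', by rw [hq'0]; exact hp0, by rw [hq'k]; exact hpk, hq'step⟩
    have hNne : Nonempty N := by
      obtain ⟨i, -⟩ := hpstep 0 hk₀pos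
      exact ⟨i⟩
    have hstep' : ∀ j : ℕ, ∃ i : N, j < k₀ → z i - chi (p j) + chi (p (j+1)) ∈ B i := by
      intro j
      by_cases h : j < k₀
      · obtain ⟨i, hi⟩ := hpstep j h
        exact ⟨i, fun _ => hi⟩
      · exact ⟨Classical.arbitrary N, fun hc => absurd hc h⟩
    choose lab hlab using hstep'
    set z' : N → E → ℤ := fun i =>
      z i + ∑ j ∈ (Finset.range k₀).filter (fun j => lab j = i),
        (chi (p (j+1)) - chi (p j)) with hz'def
    have hz' : ∀ i, z' i ∈ B i := by
      intro i
      rw [hz'def]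
      refine compose_aux (hM i) p ((Finset.range k₀).filter (fun j => lab j = i)).card
        _ le_rfl k₀ (z i) (hz i) hinj ?_ ?_ ?_
      · intro j hj
        have h1 := (Finset.mem_filter.mp hj).1
        have := Finset.mem_range.mp h1
        omega
      · intro j hj
        obtain ⟨hj1, hj2⟩ := Finset.mem_filter.mp hj
        have hh := hlab j (Finset.mem_range.mp hj1)
        rw [hj2] at hh
        exact hh
      · intro t u htu hu hmem
        exact hns t u htu hu ⟨i, hmem⟩
    have hsum : ∀ e, (∑ i, z' i e) = (∑ i, z i e) + (chi (p k₀) e - chi (p 0) e) := by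
      intro e
      rw [hz'def]
      simp only [Pi.add_apply, Finset.sum_apply, Pi.sub_apply]
      rw [Finset.sum_add_distrib]
      congr 1
      rw [Finset.sum_fiberwise (Finset.range k₀) lab
        (fun j => chi (p (j+1)) e - chi (p j) e)]
      exact Finset.sum_range_sub (fun j => chi (p j) e) k₀
    have hne' : p 0 ≠ p k₀ := by
      intro h
      have := hinj 0 (by omega) k₀ le_rfl h
      omega
    have key : ∀ e, min (∑ i, z' i e) (b e)
        = min (∑ i, z i e) (b e) + (if e = p k₀ then 1 else 0) := by
      intro e
      rw [hsum e]
      by_cases h1 : e = p k₀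
      · subst h1
        have h2 : p k₀ ≠ p 0 := Ne.symm hne'
        simp only [chi, eq_self_iff_true, if_true, if_neg h2]
        rw [min_def, min_def]
        split_ifs <;> omega
      · by_cases h2 : e = p 0
        · subst h2
          have h3 : p 0 ≠ p k₀ := hne'
          simp only [chi, eq_self_iff_true, if_true, if_neg h3, if_neg h1]
          rw [min_def, min_def]
          split_ifs <;> omega
        · simp only [chi, if_neg h1, if_neg h2]
          omega
    have hval : ∑ e : E, min (∑ i, z' i e) (b e) = v + 1 := by
      rw [Finset.sum_congr rfl (fun e _ => key e), Finset.sum_add_distrib,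
        Finset.sum_ite_eq' univ (p k₀) (fun _ => (1:ℤ)), ← hveq]
      simp
    have := hvub (v+1) ⟨z', hz', hval.symm⟩
    omega
  · -- no augmenting path: construct the tight set
    push_neg at hA
    set R : Finset E := univ.filter (fun e => PReach b B z e) with hRdef
    have hGR : ∀ e, (∑ i, z i e) < b e → e ∈ R := by
      intro e he
      refine Finset.mem_filter.mpr ⟨mem_univ _, ?_⟩
      exact ⟨0, fun _ => e, rfl, he, fun j hj => absurd hj (by omega)⟩
    have hRF : ∀ e ∈ R, (∑ i, z i e) ≤ b e := by
      intro e he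
      have hr : PReach b B z e := (Finset.mem_filter.mp he).2
      by_contra h
      push_neg at h
      exact hA e h hr
    have hno : ∀ i, ∀ e ∉ R, ∀ f ∈ R, z i - chi e + chi f ∉ B i := by
      intro i e heR f hfR hmem
      apply heR
      refine Finset.mem_filter.mpr ⟨mem_univ _, ?_⟩
      obtain ⟨k, q, hq0, hqk, hqstep⟩ := (Finset.mem_filter.mp hfR).2
      refine ⟨k+1, fun t => if t = 0 then e else q (t-1), rfl, ?_, ?_⟩
      · simpa using hqk
      · intro j hj
        by_cases hj0 : j = 0
        · subst hj0
          simp only [if_pos rfl, if_neg (by omega : ¬ (0:ℕ)+1 = 0)]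
          have : (0:ℕ)+1-1 = 0 := rfl
          rw [this, hq0]
          exact ⟨i, hmem⟩
        · simp only [if_neg hj0, if_neg (by omega : ¬ j+1 = 0)]
          have h1 : j + 1 - 1 = j := by omega
          have h2 : j - 1 + 1 = j := by omega
          rw [h1, ← h2]
          exact hqstep (j-1) (by omega)
    have htight : ∀ i, ∑ e ∈ R, z i e = ρ i R := by
      intro i
      refine le_antisymm ((hρ i R).2 ⟨z i, hz i, rfl⟩) ?_
      obtain ⟨y, hy, hyeq⟩ := (hρ i R).1
      rw [← hyeq]
      exact tight_lemma (hM i) R (hz i) (fun e he f hf => hno i e he f hf) y hy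
    refine ⟨Rᶜ, ?_⟩
    rw [compl_compl]
    have h1 : ∀ e ∈ R, min (∑ i, z i e) (b e) = ∑ i, z i e :=
      fun e he => min_eq_left (hRF e he)
    have h2 : ∀ e ∈ Rᶜ, min (∑ i, z i e) (b e) = b e := by
      intro e he
      have hnr : ¬ PReach b B z e := by
        intro hr
        exact (Finset.mem_compl.mp he) (Finset.mem_filter.mpr ⟨mem_univ _, hr⟩)
      have hb : b e ≤ ∑ i, z i e := by
        by_contra h
        push_neg at h
        exact hnr ((Finset.mem_filter.mp (hGR e h)).2)
      exact min_eq_right hb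
    have h4 : ∑ e ∈ R, (∑ i, z i e) = ∑ i, ρ i R := by
      rw [Finset.sum_comm]
      exact Finset.sum_congr rfl (fun i _ => htight i)
    have h5 := Finset.sum_compl_add_sum R (fun e => min (∑ i, z i e) (b e))
    have h6 : ∑ e ∈ Rᶜ, min (∑ i, z i e) (b e) = ∑ e ∈ Rᶜ, b e :=
      Finset.sum_congr rfl h2
    have h7 : ∑ e ∈ R, min (∑ i, z i e) (b e) = ∑ i, ρ i R := by
      rw [Finset.sum_congr rfl h1]
      exact h4
    omega
end

section
/- Let z = (z_1,…,z_n) be an optimal solution to the polymatroid sum problem max Σ_e min{Σ_i z_i(e), b(e)}. Then a set S is maximal overdemanded if and only if: E∖S is i-tight for every i, S contains no undersold item, and S contains all oversold items. Moreover, there exists a unique inclusion-wise minimal set with these properties. -/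
open Finset

variable {E : Type*} [Fintype E] [DecidableEq E]

/-- Total supply covered by the allocation `z`, capped by `b`. -/
def coveredValue {N : Type*} [Fintype N] (b : E → ℤ) (z : N → E → ℤ) : ℤ :=
  ∑ e : E, min (∑ i, z i e) (b e)

/-- The dual objective `Σ_i ρ_i(E∖S) + b(S)`. -/
def dualValue {N : Type*} [Fintype N] (b : E → ℤ) (ρ : N → Finset E → ℤ)
    (S : Finset E) : ℤ :=
  ∑ i, ρ i Sᶜ + ∑ e ∈ S, b e

/-- The three characterizing properties of a maximal overdemanded set, given an
optimal allocation `z`: the complement is `i`-tight for all `i`, `S` contains no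
undersold item, and `S` contains every oversold item. -/
def OverProps {N : Type*} [Fintype N] (b : E → ℤ) (ρ : N → Finset E → ℤ)
    (z : N → E → ℤ) (S : Finset E) : Prop :=
  (∀ i, ∑ e ∈ Sᶜ, z i e = ρ i Sᶜ) ∧
  (∀ e ∈ S, ¬ (∑ i, z i e < b e)) ∧
  (∀ e, b e < ∑ i, z i e → e ∈ S)


set_option linter.unusedSectionVars false
set_option maxHeartbeats 1000000

section Aux

lemma sum_chi_s7 (R : Finset E) (a : E) : ∑ g ∈ R, chi a g = if a ∈ R then 1 else 0 := by
  simp [chi]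

lemma sum_subchi (R : Finset E) (x : E → ℤ) (e f : E) :
    ∑ g ∈ R, (x - chi e + chi f) g
      = ∑ g ∈ R, x g - (if e ∈ R then 1 else 0) + (if f ∈ R then 1 else 0) := by
  simp only [Pi.add_apply, Pi.sub_apply, Finset.sum_add_distrib, Finset.sum_sub_distrib, sum_chi_s7]

/-- ℓ¹-distance between two vectors. -/
def dsum (x w : E → ℤ) : ℕ := ∑ g : E, (x g - w g).natAbs

lemma dsum_swap {x w : E → ℤ} {e f : E} (he : w e < x e) (hf : x f < w f) :
    dsum (x - chi e + chi f) w + 2 = dsum x w := by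
  have hef : e ≠ f := by rintro rfl; omega
  have key : ∀ g, g ≠ e → g ≠ f →
      ((x - chi e + chi f) g - w g).natAbs = (x g - w g).natAbs := by
    intro g h1 h2; simp [chi, h1, h2]
  have hxe : (x - chi e + chi f) e = x e - 1 := by simp [chi, hef]
  have hxf : (x - chi e + chi f) f = x f + 1 := by simp [chi, hef.symm]
  have hfe : f ∈ (univ : Finset E).erase e := by simp [hef.symm]
  have split : ∀ y : E → ℤ, dsum y w =
      ∑ g ∈ ((univ : Finset E).erase e).erase f, (y g - w g).natAbs
        + (y f - w f).natAbs + (y e - w e).natAbs := by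
    intro y
    rw [dsum, ← Finset.sum_erase_add _ _ (mem_univ e), ← Finset.sum_erase_add _ _ hfe]
  rw [split, split]
  have : ∑ g ∈ ((univ : Finset E).erase e).erase f, ((x - chi e + chi f) g - w g).natAbs
      = ∑ g ∈ ((univ : Finset E).erase e).erase f, (x g - w g).natAbs := by
    refine Finset.sum_congr rfl fun g hg => ?_
    simp only [Finset.mem_erase] at hg
    exact key g hg.2.1 hg.1
  rw [this, hxe, hxf]
  omega

lemma le_rank {B : Set (E → ℤ)} {ρ : Finset E → ℤ} (hρ : IsRank B ρ)
    {w : E → ℤ} (hw : w ∈ B) (S : Finset E) : ∑ e ∈ S, w e ≤ ρ S :=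
  (hρ S).2 ⟨w, hw, rfl⟩

lemma rank_attained {B : Set (E → ℤ)} {ρ : Finset E → ℤ} (hρ : IsRank B ρ)
    (S : Finset E) : ∃ y ∈ B, ∑ e ∈ S, y e = ρ S := by
  obtain ⟨y, hy, h⟩ := (hρ S).1; exact ⟨y, hy, h⟩

/-- Tightness lemma: if `R` is closed under incoming exchange arcs, then `w` is tight on `R`. -/
lemma tight_of_closed {B : Set (E → ℤ)} (hM : MConvex B) {ρ : Finset E → ℤ}
    (hρ : IsRank B ρ) {w : E → ℤ} (hw : w ∈ B) {R : Finset E}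
    (hcl : ∀ e f, e ∈ R → w - chi f + chi e ∈ B → f ∈ R) :
    ∑ e ∈ R, w e = ρ R := by
  by_contra hne
  have hlt : ∑ e ∈ R, w e < ρ R := lt_of_le_of_ne (le_rank hρ hw R) hne
  have hPne : ∃ d : ℕ, ∃ y, (y ∈ B ∧ ∑ e ∈ R, y e = ρ R) ∧ dsum y w = d := by
    obtain ⟨y, hy, h⟩ := rank_attained hρ R
    exact ⟨dsum y w, y, ⟨hy, h⟩, rfl⟩
  obtain ⟨y, hy, hyd⟩ := Nat.sInf_mem hPne
  have hmin : ∀ y', (y' ∈ B ∧ ∑ e ∈ R, y' e = ρ R) → dsum y w ≤ dsum y' w := by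
    intro y' hy'
    rw [hyd]; exact Nat.sInf_le ⟨y', hy', rfl⟩
  have : ∑ e ∈ R, w e < ∑ e ∈ R, y e := by rw [hy.2]; exact hlt
  obtain ⟨e, heR, he⟩ := Finset.exists_lt_of_sum_lt this
  obtain ⟨f, hf, hy', hw'⟩ := hM y hy.1 w hw e he
  by_cases hfR : f ∈ R
  · have h1 : y - chi e + chi f ∈ B ∧ ∑ g ∈ R, (y - chi e + chi f) g = ρ R := by
      refine ⟨hy', ?_⟩
      rw [sum_subchi, hy.2, if_pos heR, if_pos hfR]; ring
    have h4 := hmin _ h1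
    have h5 := dsum_swap he hf
    clear * - h4 h5
    omega
  · have harc : w - chi f + chi e ∈ B := by
      have : w + chi e - chi f = w - chi f + chi e := by ring
      rwa [this] at hw'
    exact hfR (hcl e f heR harc)

lemma exists_max_both {B : Set (E → ℤ)} (hM : MConvex B) {ρ : Finset E → ℤ}
    (hρ : IsRank B ρ) (A C : Finset E) :
    ∃ y ∈ B, ∑ e ∈ A ∪ C, y e = ρ (A ∪ C) ∧ ∑ e ∈ A ∩ C, y e = ρ (A ∩ C) := by
  have hbdd : ∃ m : ℤ, ∀ v : ℤ,
      (∃ y, (y ∈ B ∧ ∑ e ∈ A ∪ C, y e = ρ (A ∪ C)) ∧ ∑ e ∈ A ∩ C, y e = v) → v ≤ m :=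
    ⟨ρ (A ∩ C), by rintro v ⟨y, ⟨hy, _⟩, rfl⟩; exact le_rank hρ hy _⟩
  have hinh : ∃ v : ℤ,
      (∃ y, (y ∈ B ∧ ∑ e ∈ A ∪ C, y e = ρ (A ∪ C)) ∧ ∑ e ∈ A ∩ C, y e = v) := by
    obtain ⟨y, hy, h⟩ := rank_attained hρ (A ∪ C)
    exact ⟨_, y, ⟨hy, h⟩, rfl⟩
  obtain ⟨m, ⟨y, ⟨hyB, hyU⟩, hyI⟩, hmax⟩ := Int.exists_greatest_of_bdd hbdd hinh
  refine ⟨y, hyB, hyU, ?_⟩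
  by_contra hne
  have hlt : ∑ e ∈ A ∩ C, y e < ρ (A ∩ C) := lt_of_le_of_ne (le_rank hρ hyB _) (hyI ▸ hne)
  have hPne : ∃ d : ℕ, ∃ u, (u ∈ B ∧ ∑ e ∈ A ∩ C, u e = ρ (A ∩ C)) ∧ dsum u y = d := by
    obtain ⟨u, hu, h⟩ := rank_attained hρ (A ∩ C)
    exact ⟨_, u, ⟨hu, h⟩, rfl⟩
  obtain ⟨u, hu, hud⟩ := Nat.sInf_mem hPne
  have hmind : ∀ u', (u' ∈ B ∧ ∑ e ∈ A ∩ C, u' e = ρ (A ∩ C)) → dsum u y ≤ dsum u' y := by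
    intro u' hu'; rw [hud]; exact Nat.sInf_le ⟨u', hu', rfl⟩
  have : ∑ e ∈ A ∩ C, y e < ∑ e ∈ A ∩ C, u e := by rw [hu.2]; exact hlt
  obtain ⟨e, heI, he⟩ := Finset.exists_lt_of_sum_lt this
  obtain ⟨f, hf, hu', hy'⟩ := hM u hu.1 y hyB e he
  by_cases hfI : f ∈ A ∩ C
  · have h1 : u - chi e + chi f ∈ B ∧ ∑ g ∈ A ∩ C, (u - chi e + chi f) g = ρ (A ∩ C) := by
      refine ⟨hu', ?_⟩
      rw [sum_subchi, hu.2, if_pos heI, if_pos hfI]; ring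
    have h4 := hmind _ h1
    have h5 := dsum_swap he hf
    clear * - h4 h5
    omega
  · have hy'' : y - chi f + chi e ∈ B := by
      have : y + chi e - chi f = y - chi f + chi e := by ring
      rwa [this] at hy'
    have heU : e ∈ A ∪ C := Finset.mem_union_left _ (Finset.mem_inter.1 heI).1
    have hsumU : ∑ g ∈ A ∪ C, (y - chi f + chi e) g
        = ρ (A ∪ C) - (if f ∈ A ∪ C then 1 else 0) + 1 := by
      rw [sum_subchi, hyU, if_pos heU]
    have hle := le_rank hρ hy'' (A ∪ C)
    rw [hsumU] at hle
    have hfU : f ∈ A ∪ C := by by_contra h; rw [if_neg h] at hle; clear * - hle; omega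
    rw [if_pos hfU] at hle
    have hsumU' : ∑ g ∈ A ∪ C, (y - chi f + chi e) g = ρ (A ∪ C) := by
      rw [hsumU, if_pos hfU]; ring
    have hsumI : ∑ g ∈ A ∩ C, (y - chi f + chi e) g = m + 1 := by
      rw [sum_subchi, hyI, if_neg hfI, if_pos heI]; ring
    have h6 := hmax (m + 1) ⟨y - chi f + chi e, ⟨hy'', hsumU'⟩, hsumI⟩
    clear * - h6
    omega

lemma rank_submod {B : Set (E → ℤ)} (hM : MConvex B) {ρ : Finset E → ℤ}
    (hρ : IsRank B ρ) (A C : Finset E) :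
    ρ (A ∪ C) + ρ (A ∩ C) ≤ ρ A + ρ C := by
  obtain ⟨y, hyB, hU, hI⟩ := exists_max_both hM hρ A C
  have h3 : ∑ x ∈ A ∪ C, y x + ∑ x ∈ A ∩ C, y x = ∑ x ∈ A, y x + ∑ x ∈ C, y x :=
    Finset.sum_union_inter
  have h1 := le_rank hρ hyB A
  have h2 := le_rank hρ hyB C
  omega

lemma update_sum {N : Type*} [Fintype N] [DecidableEq N] (w : N → E → ℤ) (i : N)
    (v : E → ℤ) (e : E) :
    ∑ i', Function.update w i v i' e = ∑ i', w i' e + (v e - w i e) := by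
  have h : ∀ i', Function.update w i v i' e
      = w i' e + (if i' = i then v e - w i e else 0) := by
    intro i'; by_cases h : i' = i
    · subst h; simp
    · simp [Function.update_of_ne h, h]
  rw [Finset.sum_congr rfl fun i' _ => h i', Finset.sum_add_distrib]
  simp

lemma cv_swap {N : Type*} [Fintype N] [DecidableEq N] (b : E → ℤ) (w : N → E → ℤ)
    (i : N) {o u : E} (hou : o ≠ u) (ho : b o < ∑ i', w i' o) :
    coveredValue b (Function.update w i (w i - chi o + chi u)) =
      coveredValue b w + (if ∑ i', w i' u < b u then 1 else 0) := by
  have hsum : ∀ e, ∑ i', Function.update w i (w i - chi o + chi u) i' e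
      = ∑ i', w i' e - chi o e + chi u e := by
    intro e; rw [update_sum]; simp only [Pi.add_apply, Pi.sub_apply]; ring
  have huo : u ∈ (univ : Finset E).erase o := by simp [Ne.symm hou]
  have split : ∀ F : E → ℤ, ∑ e : E, F e =
      ∑ e ∈ ((univ : Finset E).erase o).erase u, F e + F u + F o := by
    intro F
    rw [← Finset.sum_erase_add _ _ (mem_univ o), ← Finset.sum_erase_add _ _ huo]
  rw [coveredValue, coveredValue, split, split (fun e => min (∑ i, w i e) (b e))]
  have hco : ∀ e, e ≠ o → e ≠ u →
      min (∑ i', Function.update w i (w i - chi o + chi u) i' e) (b e)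
        = min (∑ i, w i e) (b e) := by
    intro e h1 h2; rw [hsum]; simp [chi, h1, h2]
  rw [Finset.sum_congr rfl (fun e he => by
    simp only [Finset.mem_erase] at he; exact hco e he.2.1 he.1)]
  rw [hsum, hsum]
  have hoo : chi o o = 1 := by simp [chi]
  have huu : chi u u = 1 := by simp [chi]
  have hou' : chi o u = (0 : ℤ) := by simp [chi, Ne.symm hou]
  have huo' : chi u o = (0 : ℤ) := by simp [chi, hou]
  rw [hoo, huu, hou', huo']
  have h1 : min (∑ i', w i' o - 1 + 0) (b o) = min (∑ i', w i' o) (b o) := by omega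
  have h2 : min (∑ i', w i' u - 0 + 1) (b u)
      = min (∑ i', w i' u) (b u) + (if ∑ i', w i' u < b u then 1 else 0) := by
    split_ifs with h <;> omega
  rw [h1, h2]; ring

/-- No augmenting path from an oversold to an undersold item exists for any optimal
allocation. -/
lemma no_aug_path {N : Type*} [Fintype N] [DecidableEq N] (b : E → ℤ)
    (B : N → Set (E → ℤ)) (hM : ∀ i, MConvex (B i)) (z : N → E → ℤ)
    (hopt : ∀ z' : N → E → ℤ, (∀ i, z' i ∈ B i) →
      coveredValue b z' ≤ coveredValue b z) :
    ∀ k : ℕ, ∀ w : N → E → ℤ, (∀ i, w i ∈ B i) →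
    coveredValue b w = coveredValue b z →
    ∀ p : ℕ → E, (b (p 0) < ∑ i, w i (p 0)) → (∑ i, w i (p k) < b (p k)) →
    (∀ j < k, ∃ i, w i - chi (p j) + chi (p (j+1)) ∈ B i) → False := by
  intro k
  induction k using Nat.strong_induction_on with
  | _ k IH =>
  intro w hw hcv p hp0 hpk harc
  have hk0 : k ≠ 0 := by rintro rfl; omega
  have hinj : ∀ a c, a < c → c ≤ k → p a ≠ p c := by
    intro a c hac hck heq
    by_cases hck' : c = k
    · subst hck'
      exact IH a (lt_of_lt_of_le hac hck) w hw hcv p hp0 (heq ▸ hpk)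
        (fun j hj => harc j (by omega))
    · have hck2 : c < k := lt_of_le_of_ne hck hck'
      set q : ℕ → E := fun j => if j ≤ a then p j else p (j + (c - a)) with hq
      refine IH (k - (c - a)) (by omega) w hw hcv q ?_ ?_ ?_
      · have : q 0 = p 0 := by simp [hq]
        rw [this]; exact hp0
      · have : q (k - (c - a)) = p k := by
          rw [hq]; simp only
          rw [if_neg (by omega)]
          congr 1; omega
        rw [this]; exact hpk
      · intro j hj
        rcases lt_trichotomy j a with h | h | h
        · have e1 : q j = p j := by rw [hq]; simp only; rw [if_pos (by omega)]
          have e2 : q (j+1) = p (j+1) := by rw [hq]; simp only; rw [if_pos (by omega)]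
          rw [e1, e2]; exact harc j (by omega)
        · subst h
          have e1 : q j = p c := by rw [hq]; simp only; rw [if_pos (by omega)]; exact heq
          have e2 : q (j+1) = p (c+1) := by
            rw [hq]; simp only; rw [if_neg (by omega)]; congr 1; omega
          rw [e1, e2]; exact harc c (by omega)
        · have e1 : q j = p (j + (c - a)) := by rw [hq]; simp only; rw [if_neg (by omega)]
          have e2 : q (j+1) = p (j + (c - a) + 1) := by
            rw [hq]; simp only; rw [if_neg (by omega)]; congr 1; omega
          rw [e1, e2]; exact harc (j + (c - a)) (by omega)
  obtain ⟨i, arc0⟩ := harc 0 (by omega)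
  have hfeas : ∀ i', Function.update w i (w i - chi (p 0) + chi (p 1)) i' ∈ B i' := by
    intro i'; by_cases h : i' = i
    · subst h; rw [Function.update_self]; exact arc0
    · rw [Function.update_of_ne h]; exact hw i'
  have hp01 : p 0 ≠ p 1 := hinj 0 1 (by omega) (by omega)
  by_cases hk1 : k = 1
  · subst hk1
    have hcv' := cv_swap b w i hp01 hp0
    rw [if_pos hpk] at hcv'
    have := hopt _ hfeas
    omega
  · have hk2 : 2 ≤ k := by omega
    have h1ns : ¬ (∑ i', w i' (p 1) < b (p 1)) := by
      intro hcon
      exact IH 1 (by omega) w hw hcv p hp0 hcon (fun j hj => harc j (by omega))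
    set w' : N → E → ℤ := Function.update w i (w i - chi (p 0) + chi (p 1)) with hw'def
    have hcv' : coveredValue b w' = coveredValue b z := by
      rw [hw'def, cv_swap b w i hp01 hp0, if_neg h1ns, add_zero]; exact hcv
    have hsum' : ∀ e, ∑ i', w' i' e = ∑ i', w i' e - chi (p 0) e + chi (p 1) e := by
      intro e; rw [hw'def, update_sum]; simp only [Pi.add_apply, Pi.sub_apply]; ring
    have hw'i : w' i = w i - chi (p 0) + chi (p 1) := by
      rw [hw'def, Function.update_self]
    refine IH (k - 1) (by omega) w' hfeas hcv' (fun j => p (j + 1)) ?_ ?_ ?_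
    · show b (p 1) < ∑ i', w' i' (p 1)
      rw [hsum' (p 1)]
      have c1 : chi (p 0) (p 1) = 0 := by simp [chi, Ne.symm hp01]
      have c2 : chi (p 1) (p 1) = 1 := by simp [chi]
      rw [c1, c2]; omega
    · have hek : k - 1 + 1 = k := by omega
      show ∑ i', w' i' (p (k - 1 + 1)) < b (p (k - 1 + 1))
      rw [hek, hsum' (p k)]
      have c1 : chi (p 0) (p k) = 0 := by
        simp [chi, (hinj 0 k (by omega) le_rfl).symm]
      have c2 : chi (p 1) (p k) = 0 := by
        simp [chi, (hinj 1 k (by omega) le_rfl).symm]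
      rw [c1, c2]; omega
    · intro j hj
      set l : ℕ := j + 1 with hl
      have hlk : l < k := by omega
      have hl1 : 1 ≤ l := by omega
      obtain ⟨i', hi'⟩ := harc l hlk
      show ∃ i'', w' i'' - chi (p l) + chi (p (l + 1)) ∈ B i''
      by_cases hii : i' = i
      · subst hii
        have hne_l0 : p l ≠ p 0 := (hinj 0 l (by omega) (by omega)).symm
        have hne_l10 : p (l+1) ≠ p 0 := (hinj 0 (l+1) (by omega) (by omega)).symm
        have hne_ll1 : p l ≠ p (l+1) := hinj l (l+1) (by omega) (by omega)
        have hne_1l1 : p 1 ≠ p (l+1) := hinj 1 (l+1) (by omega) (by omega)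
        have hlt : (w i' - chi (p 0) + chi (p 1)) (p 0)
            < (w i' - chi (p l) + chi (p (l+1))) (p 0) := by
          simp only [Pi.add_apply, Pi.sub_apply]
          have c1 : chi (p 0) (p 0) = 1 := by simp [chi]
          have c2 : chi (p 1) (p 0) = 0 := by simp [chi, hp01]
          have c3 : chi (p l) (p 0) = 0 := by simp [chi, Ne.symm hne_l0]
          have c4 : chi (p (l+1)) (p 0) = 0 := by simp [chi, Ne.symm hne_l10]
          rw [c1, c2, c3, c4]; omega
        obtain ⟨f, hfx, hmem1, _⟩ := hM i' _ hi' _ arc0 (p 0) hlt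
        by_cases hfl : f = p l
        · subst hfl
          have hsc : w i' - chi (p 0) + chi (p (l+1)) ∈ B i' := by
            have heq2 : w i' - chi (p l) + chi (p (l+1)) - chi (p 0) + chi (p l)
                = w i' - chi (p 0) + chi (p (l+1)) := by ring
            rwa [heq2] at hmem1
          exfalso
          set r : ℕ → E := fun j => if j = 0 then p 0 else p (l + j) with hr
          refine IH (k - l) (by omega) w hw hcv r ?_ ?_ ?_
          · have : r 0 = p 0 := by simp [hr]
            rw [this]; exact hp0
          · have : r (k - l) = p k := by
              rw [hr]; simp only; rw [if_neg (by omega)]; congr 1; omega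
            rw [this]; exact hpk
          · intro j' hj'
            by_cases hj0 : j' = 0
            · subst hj0
              have e1 : r 0 = p 0 := by simp [hr]
              have e2 : r 1 = p (l + 1) := by simp [hr]
              rw [e1, e2]; exact ⟨i', hsc⟩
            · have e1 : r j' = p (l + j') := by rw [hr]; simp only; rw [if_neg hj0]
              have e2 : r (j' + 1) = p (l + j' + 1) := by
                rw [hr]; simp only; rw [if_neg (by omega)]; congr 1
              rw [e1, e2]; exact harc (l + j') (by omega)
        · by_cases hf1 : f = p 1
          · subst hf1
            refine ⟨i', ?_⟩
            have heq2 : w i' - chi (p l) + chi (p (l+1)) - chi (p 0) + chi (p 1)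
                = (w i' - chi (p 0) + chi (p 1)) - chi (p l) + chi (p (l+1)) := by ring
            rw [heq2] at hmem1
            rwa [hw'i]
          · exfalso
            simp only [Pi.add_apply, Pi.sub_apply, chi] at hfx
            rw [if_neg hfl, if_neg hf1] at hfx
            split_ifs at hfx <;> omega
      · refine ⟨i', ?_⟩
        rw [hw'def, Function.update_of_ne hii]
        exact hi'

lemma dual_identity {N : Type*} [Fintype N] (b : E → ℤ) (ρ : N → Finset E → ℤ)
    (z : N → E → ℤ) (S : Finset E) :
    dualValue b ρ S = coveredValue b z
      + ((∑ e ∈ Sᶜ, (∑ i, z i e - min (∑ i, z i e) (b e)))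
        + (∑ e ∈ S, (b e - min (∑ i, z i e) (b e)))
        + (∑ i, (ρ i Sᶜ - ∑ e ∈ Sᶜ, z i e))) := by
  have hsplit : ∑ e : E, min (∑ i, z i e) (b e)
      = ∑ e ∈ Sᶜ, min (∑ i, z i e) (b e) + ∑ e ∈ S, min (∑ i, z i e) (b e) :=
    (Finset.sum_compl_add_sum S _).symm
  have hcomm : ∑ i, ∑ e ∈ Sᶜ, z i e = ∑ e ∈ Sᶜ, ∑ i, z i e := Finset.sum_comm
  rw [dualValue, coveredValue, hsplit, Finset.sum_sub_distrib, Finset.sum_sub_distrib,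
    Finset.sum_sub_distrib, hcomm]
  ring

end Aux

/-- For an optimal solution of the polymatroid sum problem, a set is maximal
overdemanded (a minimizer of the dual objective) iff it satisfies the three
properties, and there is a unique inclusion-wise minimal such set. -/

theorem stmt7 {N : Type*} [Fintype N] (b : E → ℤ) (B : N → Set (E → ℤ))
    (hBox : ∀ i, B i ⊆ Box b) (hM : ∀ i, MConvex (B i))
    (ρ : N → Finset E → ℤ) (hρ : ∀ i, IsRank (B i) (ρ i))
    (z : N → E → ℤ) (hz : ∀ i, z i ∈ B i)
    (hopt : ∀ z' : N → E → ℤ, (∀ i, z' i ∈ B i) →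
      coveredValue b z' ≤ coveredValue b z) :
    (∀ S : Finset E,
      (∀ T : Finset E, dualValue b ρ S ≤ dualValue b ρ T) ↔ OverProps b ρ z S) ∧
    (∃! S : Finset E, OverProps b ρ z S ∧
      ∀ S' : Finset E, OverProps b ρ z S' → S ⊆ S') := by
  classical
  -- the exchange-reachability set `R` (items from which an undersold item is reachable)
  set Reach : E → Prop := fun e => ∃ (k : ℕ) (p : ℕ → E), p 0 = e ∧
      (∑ i, z i (p k) < b (p k)) ∧
      (∀ j < k, ∃ i, z i - chi (p j) + chi (p (j+1)) ∈ B i) with hReach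
  set R : Finset E := univ.filter Reach with hR
  have hUR : ∀ e, (∑ i, z i e < b e) → e ∈ R := by
    intro e he
    exact Finset.mem_filter.2 ⟨mem_univ e, 0, fun _ => e, rfl, he, by omega⟩
  have hOR : ∀ e ∈ R, ¬ (b e < ∑ i, z i e) := by
    intro e heR hover
    obtain ⟨k, p, hp0, hpk, harc⟩ := (Finset.mem_filter.1 heR).2
    exact no_aug_path b B hM z hopt k z hz rfl p (by rw [hp0]; exact hover) hpk harc
  have hclose : ∀ (i0 : N) (e f : E), e ∈ R → z i0 - chi f + chi e ∈ B i0 → f ∈ R := by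
    intro i0 e f heR hmem
    obtain ⟨k, p, hp0, hpk, harc⟩ := (Finset.mem_filter.1 heR).2
    refine Finset.mem_filter.2 ⟨mem_univ f,
      k + 1, fun j => if j = 0 then f else p (j - 1), rfl, ?_, ?_⟩
    · simp only [Nat.succ_ne_zero, if_neg, Nat.add_sub_cancel]
      exact hpk
    · intro j hj
      by_cases hj0 : j = 0
      · subst hj0
        simp only [if_pos rfl, if_neg (Nat.one_ne_zero)]
        exact ⟨i0, by rw [Nat.sub_self, hp0]; exact hmem⟩
      · have e1 : (if j = 0 then f else p (j - 1)) = p (j - 1) := if_neg hj0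
        have e2 : (if j + 1 = 0 then f else p (j + 1 - 1)) = p ((j - 1) + 1) := by
          rw [if_neg (Nat.succ_ne_zero j)]; congr 1; omega
        show ∃ i, z i - chi (if j = 0 then f else p (j - 1))
          + chi (if j + 1 = 0 then f else p (j + 1 - 1)) ∈ B i
        rw [e1, e2]
        have hj1 : j - 1 + 1 = j := by omega
        rw [hj1]
        have harcj := harc (j - 1) (by omega)
        rwa [hj1] at harcj
  -- the canonical maximal overdemanded set
  have hprops0 : OverProps b ρ z Rᶜ := by
    refine ⟨?_, ?_, ?_⟩
    · intro i
      rw [compl_compl]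
      exact tight_of_closed (hM i) (hρ i) (hz i) (hclose i)
    · intro e he hu
      rw [Finset.mem_compl] at he
      exact he (hUR e hu)
    · intro e hover
      rw [Finset.mem_compl]
      intro heR
      exact hOR e heR hover
  -- complementary slackness via the identity
  have hkey : ∀ S : Finset E, dualValue b ρ S = coveredValue b z
      + ((∑ e ∈ Sᶜ, (∑ i, z i e - min (∑ i, z i e) (b e)))
        + (∑ e ∈ S, (b e - min (∑ i, z i e) (b e)))
        + (∑ i, (ρ i Sᶜ - ∑ e ∈ Sᶜ, z i e))) := fun S => dual_identity b ρ z S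
  have hA : ∀ S : Finset E, (0:ℤ) ≤ ∑ e ∈ Sᶜ, (∑ i, z i e - min (∑ i, z i e) (b e)) :=
    fun S => Finset.sum_nonneg fun e _ => by
      have := min_le_left (∑ i, z i e) (b e); omega
  have hB2 : ∀ S : Finset E, (0:ℤ) ≤ ∑ e ∈ S, (b e - min (∑ i, z i e) (b e)) :=
    fun S => Finset.sum_nonneg fun e _ => by
      have := min_le_right (∑ i, z i e) (b e); omega
  have hC2 : ∀ S : Finset E, (0:ℤ) ≤ ∑ i, (ρ i Sᶜ - ∑ e ∈ Sᶜ, z i e) :=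
    fun S => Finset.sum_nonneg fun i _ => by
      have := le_rank (hρ i) (hz i) Sᶜ; omega
  have hweak : ∀ S : Finset E, coveredValue b z ≤ dualValue b ρ S := by
    intro S
    have h1 := hA S; have h2 := hB2 S; have h3 := hC2 S; have h4 := hkey S
    omega
  have hdc : ∀ S : Finset E, dualValue b ρ S = coveredValue b z ↔ OverProps b ρ z S := by
    intro S
    constructor
    · intro h
      have h1 := hA S; have h2 := hB2 S; have h3 := hC2 S
      rw [hkey S] at h
      have hA0 : ∑ e ∈ Sᶜ, (∑ i, z i e - min (∑ i, z i e) (b e)) = 0 := by omega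
      have hB0 : ∑ e ∈ S, (b e - min (∑ i, z i e) (b e)) = 0 := by omega
      have hC0 : ∑ i, (ρ i Sᶜ - ∑ e ∈ Sᶜ, z i e) = 0 := by omega
      have hAe := (Finset.sum_eq_zero_iff_of_nonneg fun e _ => by
        have := min_le_left (∑ i, z i e) (b e); omega).1 hA0
      have hBe := (Finset.sum_eq_zero_iff_of_nonneg fun e _ => by
        have := min_le_right (∑ i, z i e) (b e); omega).1 hB0
      have hCe := (Finset.sum_eq_zero_iff_of_nonneg fun i _ => by
        have := le_rank (hρ i) (hz i) Sᶜ; omega).1 hC0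
      refine ⟨?_, ?_, ?_⟩
      · intro i
        have := hCe i (mem_univ i); omega
      · intro e heS hu
        have := hBe e heS
        have := min_le_left (∑ i, z i e) (b e)
        omega
      · intro e hover
        by_contra heS
        have heSc : e ∈ Sᶜ := Finset.mem_compl.2 heS
        have := hAe e heSc
        have := min_le_right (∑ i, z i e) (b e)
        omega
    · rintro ⟨h1, h2, h3⟩
      rw [hkey S]
      have hA0 : ∑ e ∈ Sᶜ, (∑ i, z i e - min (∑ i, z i e) (b e)) = 0 :=
        Finset.sum_eq_zero fun e he => by
          have hns : ¬ (b e < ∑ i, z i e) := fun hc => (Finset.mem_compl.1 he) (h3 e hc)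
          have : min (∑ i, z i e) (b e) = ∑ i, z i e := min_eq_left (by omega)
          omega
      have hB0 : ∑ e ∈ S, (b e - min (∑ i, z i e) (b e)) = 0 :=
        Finset.sum_eq_zero fun e he => by
          have := h2 e he
          have : min (∑ i, z i e) (b e) = b e := min_eq_right (by omega)
          omega
      have hC0 : ∑ i, (ρ i Sᶜ - ∑ e ∈ Sᶜ, z i e) = 0 :=
        Finset.sum_eq_zero fun i _ => by rw [h1 i]; ring
      rw [hA0, hB0, hC0]; ring
  have hd0 : dualValue b ρ Rᶜ = coveredValue b z := (hdc Rᶜ).2 hprops0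
  have hiff : ∀ S : Finset E,
      (∀ T : Finset E, dualValue b ρ S ≤ dualValue b ρ T) ↔ OverProps b ρ z S := by
    intro S
    constructor
    · intro h
      refine (hdc S).1 (le_antisymm ?_ (hweak S))
      calc dualValue b ρ S ≤ dualValue b ρ Rᶜ := h Rᶜ
        _ = coveredValue b z := hd0
    · intro hp T
      rw [(hdc S).2 hp]
      exact hweak T
  refine ⟨hiff, ?_⟩
  -- closure of the family under intersection
  have hinter : ∀ S T : Finset E, OverProps b ρ z S → OverProps b ρ z T →
      OverProps b ρ z (S ∩ T) := by
    intro S T hS hT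
    have hdS : dualValue b ρ S = coveredValue b z := (hdc S).2 hS
    have hdT : dualValue b ρ T = coveredValue b z := (hdc T).2 hT
    have hsubm : dualValue b ρ (S ∩ T) + dualValue b ρ (S ∪ T)
        ≤ dualValue b ρ S + dualValue b ρ T := by
      have hb : ∑ e ∈ S ∪ T, b e + ∑ e ∈ S ∩ T, b e = ∑ e ∈ S, b e + ∑ e ∈ T, b e :=
        Finset.sum_union_inter
      have hρ2 : ∑ i, ρ i (S ∩ T)ᶜ + ∑ i, ρ i (S ∪ T)ᶜ ≤ ∑ i, ρ i Sᶜ + ∑ i, ρ i Tᶜ := by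
        rw [Finset.compl_inter, Finset.compl_union, ← Finset.sum_add_distrib,
          ← Finset.sum_add_distrib]
        exact Finset.sum_le_sum fun i _ => rank_submod (hM i) (hρ i) Sᶜ Tᶜ
      rw [dualValue, dualValue, dualValue, dualValue]
      omega
    have h1 := hweak (S ∩ T)
    have h2 := hweak (S ∪ T)
    exact (hdc (S ∩ T)).1 (by omega)
  -- minimal-cardinality member of the family
  have hfam : ((univ : Finset (Finset E)).filter (fun S => OverProps b ρ z S)).Nonempty :=
    ⟨Rᶜ, Finset.mem_filter.2 ⟨mem_univ _, hprops0⟩⟩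
  obtain ⟨S0, hS0mem, hS0min⟩ := Finset.exists_min_image _ (fun S => S.card) hfam
  have hS0p : OverProps b ρ z S0 := (Finset.mem_filter.1 hS0mem).2
  have hS0sub : ∀ S' : Finset E, OverProps b ρ z S' → S0 ⊆ S' := by
    intro S' hS'
    have hip : OverProps b ρ z (S0 ∩ S') := hinter _ _ hS0p hS'
    have hmem : S0 ∩ S' ∈ (univ : Finset (Finset E)).filter (fun S => OverProps b ρ z S) :=
      Finset.mem_filter.2 ⟨mem_univ _, hip⟩
    have hcard := hS0min _ hmem
    have heq : S0 ∩ S' = S0 :=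
      Finset.eq_of_subset_of_card_le (Finset.inter_subset_left) hcard
    exact Finset.inter_eq_left.1 heq
  refine ⟨S0, ⟨hS0p, hS0sub⟩, ?_⟩
  rintro S' ⟨hS'p, hS'sub⟩
  exact Finset.Subset.antisymm (hS'sub S0 hS0p) (hS0sub S' hS'p)
end
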